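/- If Eve has a winning strategy in the 2-token game G_2(A) on a quantitative automaton A, then for every k ≥ 1 she has a winning strategy in the k-token game G_k(A). Moreover, if her G_2 strategy uses memory of size m and A has n states, then her G_k strategy can be implemented with memory of size n^{k−1}·m^k. -/

import Mathlib

/-- A (total) nondeterministic quantitative automaton with alphabet `α`,
states `Q` and weights `W`. -/
structure QAut (α Q W : Type) where
  init : Q
  trans : Set (Q × α × W × Q)
  total : ∀ q a, ∃ x q', (q, a, x, q') ∈ trans

namespace QAut

variable {α Q W : Type} (A : QAut α Q W)

/-- The state reached after `n` transitions of `τ`, starting from `q`. -/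
def stateAt (q : Q) (τ : ℕ → W × Q) : ℕ → Q
  | 0 => q
  | n + 1 => (τ n).2

/-- `τ` is a legal infinite run of `A` from `q` over word `w`. -/
def RunFrom (q : Q) (w : ℕ → α) (τ : ℕ → W × Q) : Prop :=
  ∀ n, (stateAt q τ n, w n, (τ n).1, (τ n).2) ∈ A.trans

/-- `τ` is a legal infinite run of `A` (from the initial state) over word `w`. -/
def RunOn (w : ℕ → α) (τ : ℕ → W × Q) : Prop := A.RunFrom A.init w τ

/-- The value of automaton `A` on word `w`: the supremum of the values of all runs. -/
noncomputable def wordVal (Val : (ℕ → W) → ℝ) (w : ℕ → α) : ℝ :=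
  sSup { v | ∃ τ, A.RunOn w τ ∧ v = Val (fun n => (τ n).1) }

/-- A round of the `k`-token game: the letter played by Adam, Eve's transition,
and Adam's `k` transitions. -/
abbrev GkRound (α Q W : Type) (k : ℕ) := α × (W × Q) × (Fin k → W × Q)

/-- A strategy of Eve in the `k`-token game: given the history of rounds so far
and the current letter, pick a transition. -/
abbrev GkStrat (α Q W : Type) (k : ℕ) := List (GkRound α Q W k) → α → W × Q

/-- A play of the `k`-token game is consistent with Eve's strategy `s`. -/
def GkConsistent {k : ℕ} (s : GkStrat α Q W k) (π : ℕ → GkRound α Q W k) : Prop :=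
  ∀ n, (π n).2.1 = s ((List.range n).map π) (π n).1

/-- Eve's strategy `s` is winning in the `k`-token game with winning condition `good`
(comparing Eve's weight sequence with Adam's `k` weight sequences): on every
consistent play in which Adam's `k` tokens trace legal runs, Eve's token traces
a legal run and the condition `good` holds. -/
def GkWinning (k : ℕ) (good : (ℕ → W) → (Fin k → ℕ → W) → Prop)
    (s : GkStrat α Q W k) : Prop :=
  ∀ π : ℕ → GkRound α Q W k, GkConsistent s π →
    (∀ j, A.RunOn (fun n => (π n).1) (fun n => (π n).2.2 j)) →
    A.RunOn (fun n => (π n).1) (fun n => (π n).2.1) ∧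
      good (fun n => ((π n).2.1).1) (fun j n => ((π n).2.2 j).1)

/-- Eve wins the `k`-token game `G_k(A)` with winning condition `good`. -/
def EveWinsGk (k : ℕ) (good : (ℕ → W) → (Fin k → ℕ → W) → Prop) : Prop :=
  ∃ s, A.GkWinning k good s

/-- The value-comparison winning condition of token games for value function `Val`:
Eve's run's value is at least the maximum of the values of Adam's runs. -/
def goodVal (Val : (ℕ → W) → ℝ) {k : ℕ} (ve : ℕ → W) (va : Fin k → ℕ → W) : Prop :=
  ∀ j, Val (va j) ≤ Val ve

/-- A round of the letter game: the letter played by Adam and Eve's transition. -/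
abbrev LRound (α Q W : Type) := α × (W × Q)

/-- A strategy of Eve in the letter game. -/
abbrev LStrat (α Q W : Type) := List (LRound α Q W) → α → W × Q

/-- A play of the letter game is consistent with Eve's strategy `s`. -/
def LConsistent (s : LStrat α Q W) (π : ℕ → LRound α Q W) : Prop :=
  ∀ n, (π n).2 = s ((List.range n).map π) (π n).1

/-- `s` is winning for Eve in the letter game with winning condition `good`
(a predicate of the word and Eve's weight sequence). -/
def LetterWinning (good : (ℕ → α) → (ℕ → W) → Prop) (s : LStrat α Q W) : Prop :=
  ∀ π : ℕ → LRound α Q W, LConsistent s π →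
    A.RunOn (fun n => (π n).1) (fun n => (π n).2) ∧
      good (fun n => (π n).1) (fun n => ((π n).2).1)

/-- `s` witnesses history-determinism: it wins the letter game, where Eve wins a
play iff the value of her run is at least the value of the word. -/
def HDWinning (Val : (ℕ → W) → ℝ) (s : LStrat α Q W) : Prop :=
  A.LetterWinning (fun w ve => A.wordVal Val w ≤ Val ve) s

/-- `A` is history-deterministic for value function `Val`: Eve wins the letter game. -/
def HD (Val : (ℕ → W) → ℝ) : Prop := ∃ s, A.HDWinning Val s

/-- A round of the `k`-runs letter game: a letter and Eve's `k` transitions. -/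
abbrev KRound (α Q W : Type) (k : ℕ) := α × (Fin k → W × Q)

/-- `A` is `k`-history-deterministic: Eve wins the `k`-runs letter game, in which
she moves `k` tokens and wins if the maximum of her runs' values equals the
value of the word. -/
noncomputable def kHD (k : ℕ) (Val : (ℕ → W) → ℝ) : Prop :=
  ∃ s : List (KRound α Q W k) → α → Fin k → W × Q,
    ∀ π : ℕ → KRound α Q W k,
      (∀ n, (π n).2 = s ((List.range n).map π) (π n).1) →
      (∀ j, A.RunOn (fun n => (π n).1) (fun n => (π n).2 j)) ∧
        (⨆ j, Val (fun n => ((π n).2 j).1)) = A.wordVal Val (fun n => (π n).1)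

/-- `h` is a legal finite run prefix of `A` from state `q`. -/
def FinRun (A : QAut α Q W) : Q → List (LRound α Q W) → Prop
  | _, [] => True
  | q, (a, xq) :: t => (q, a, xq.1, xq.2) ∈ A.trans ∧ FinRun A xq.2 t

/-- The state at the end of a finite run prefix starting from `q`. -/
def endSt : Q → List (LRound α Q W) → Q
  | q, [] => q
  | _, (_, xq) :: t => endSt xq.2 t

/-- The infinite weight sequence obtained by following the finite prefix `pre`
and then the infinite sequence `f`. -/
def splice (pre : List W) (f : ℕ → W) : ℕ → W := fun n =>
  if h : n < pre.length then pre.get ⟨n, h⟩ else f (n - pre.length)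

/-- The move `t` of Eve, on letter `σ` after history `h`, is non-cautious:
there is a continuation word `u` (starting with `σ`) and a run `π'` on it from the
current state whose value (together with the prefix) strictly exceeds the value of
every run on `u` starting with `t`. -/
def NonCautious (Val : (ℕ → W) → ℝ) (h : List (LRound α Q W)) (σ : α) (t : W × Q) : Prop :=
  ∃ u : ℕ → α, u 0 = σ ∧ ∃ π', A.RunFrom (endSt A.init h) u π' ∧
    ∀ π, A.RunFrom (endSt A.init h) u π → π 0 = t →
      Val (splice (h.map (fun r => r.2.1)) (fun n => (π n).1)) <
        Val (splice (h.map (fun r => r.2.1)) (fun n => (π' n).1))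

/-- A finite history is consistent with Eve's letter-game strategy `s`. -/
def HistConsistent (s : LStrat α Q W) (h : List (LRound α Q W)) : Prop :=
  ∀ n (hn : n < h.length), (h.get ⟨n, hn⟩).2 = s (h.take n) (h.get ⟨n, hn⟩).1

/-- Eve's letter-game strategy `s` is cautious: it never makes a non-cautious move
(along histories that arise when playing `s`). -/
def Cautious (Val : (ℕ → W) → ℝ) (s : LStrat α Q W) : Prop :=
  ∀ h, A.FinRun A.init h → HistConsistent s h →
    ∀ σ, ¬ A.NonCautious Val h σ (s h σ)

end QAut

/-- A `k`-token game strategy `s` can be implemented with memory of size `N`: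
there is a memory structure with at most `N` states, updated by the rounds of
the play, such that `s`'s choice depends only on the memory state and the
current letter. -/
def GkStratMemory {α Q W : Type} {k : ℕ} (s : QAut.GkStrat α Q W k) (N : ℕ) : Prop :=
  ∃ (M : Type) (i : Fintype M) (m0 : M) (upd : M → QAut.GkRound α Q W k → M)
    (out : M → α → W × Q),
    @Fintype.card M i ≤ N ∧ ∀ h a, s h a = out (h.foldl upd m0) a

/-- If Eve has a winning strategy in the 2-token game `G_2(A)`,
then for every `k ≥ 1` she has a winning strategy in the `k`-token game
`G_k(A)`; moreover, if her `G_2` strategy uses memory of size `m` and `A` has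
`n` states, then her `G_k` strategy can be implemented with memory of size
`n^(k-1) * m^k`. -/
theorem g2_implies_gk_with_memory {α Q W : Type} [Fintype Q] (A : QAut α Q W)
    (Val : (ℕ → W) → ℝ) (n m : ℕ) (hn : Fintype.card Q = n)
    (s2 : QAut.GkStrat α Q W 2)
    (hs2 : A.GkWinning 2 (QAut.goodVal Val) s2) (hm : GkStratMemory s2 m) :
    ∀ k : ℕ, 1 ≤ k →
      ∃ s : QAut.GkStrat α Q W k,
        A.GkWinning k (QAut.goodVal Val) s ∧
          GkStratMemory s (n ^ (k - 1) * m ^ k) := by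

  intro k hk
  induction k, hk using Nat.le_induction with
  | base =>
    obtain ⟨M, i, m0, upd, out, hcard, hout⟩ := hm
    let g : QAut.GkRound α Q W 1 → QAut.GkRound α Q W 2 :=
      fun r => (r.1, r.2.1, fun _ => r.2.2 0)
    refine ⟨fun h a => s2 (h.map g) a, ?_, ?_⟩
    · intro π hcons hruns
      have hcons2 : QAut.GkConsistent s2 (fun n => g (π n)) := by
        intro n
        have h1 := hcons n
        have e : (List.range n).map (fun i => g (π i)) =
            ((List.range n).map π).map g := by
          rw [List.map_map]; rfl
        show (π n).2.1 = s2 ((List.range n).map fun i => g (π i)) (π n).1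
        rw [e]
        exact h1
      have hruns2 : ∀ j : Fin 2,
          A.RunOn (fun n => (g (π n)).1) (fun n => (g (π n)).2.2 j) := by
        intro j
        exact hruns 0
      obtain ⟨hrun, hgood⟩ := hs2 _ hcons2 hruns2
      refine ⟨hrun, ?_⟩
      intro j
      have hj : j = 0 := Subsingleton.elim _ _
      subst hj
      exact hgood 0
    · refine ⟨M, i, m0, fun mem r => upd mem (g r), out, ?_, ?_⟩
      · simpa using hcard
      · intro h a
        show s2 (h.map g) a = _
        rw [hout (h.map g) a, List.foldl_map]
  | succ k hk ih =>
    obtain ⟨sk, hwk, Mk, ik, mk0, updk, outk, hcardk, houtk⟩ := ih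
    obtain ⟨M2, i2, m20, upd2, out2, hcard2, hout2⟩ := hm
    have hn1 : 1 ≤ n := by
      rw [← hn]; exact Fintype.card_pos_iff.mpr ⟨A.init⟩
    let vr : Mk → QAut.GkRound α Q W (k+1) → QAut.GkRound α Q W k :=
      fun mk r => (r.1, outk mk r.1, fun j => r.2.2 j.castSucc)
    let r2 : Mk → QAut.GkRound α Q W (k+1) → QAut.GkRound α Q W 2 :=
      fun mk r => (r.1, r.2.1, ![outk mk r.1, r.2.2 (Fin.last k)])
    let upd : Mk × M2 → QAut.GkRound α Q W (k+1) → Mk × M2 :=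
      fun p r => (updk p.1 (vr p.1 r), upd2 p.2 (r2 p.1 r))
    let s : QAut.GkStrat α Q W (k+1) :=
      fun h a => out2 (h.foldl upd (mk0, m20)).2 a
    refine ⟨s, ?_, ?_⟩
    · intro π hcons hruns
      let mem : ℕ → Mk × M2 := fun n => ((List.range n).map π).foldl upd (mk0, m20)
      have hmem_succ : ∀ n, mem (n+1) = upd (mem n) (π n) := by
        intro n
        show ((List.range (n+1)).map π).foldl upd (mk0, m20) = _
        rw [List.range_succ, List.map_append, List.foldl_append]
        rfl
      let πk : ℕ → QAut.GkRound α Q W k := fun n => vr (mem n).1 (π n)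
      let π2 : ℕ → QAut.GkRound α Q W 2 := fun n => r2 (mem n).1 (π n)
      have hfold : ∀ n, ((List.range n).map πk).foldl updk mk0 = (mem n).1 ∧
          ((List.range n).map π2).foldl upd2 m20 = (mem n).2 := by
        intro n
        induction n with
        | zero => exact ⟨rfl, rfl⟩
        | succ n ihn =>
          rw [hmem_succ n]
          constructor
          · rw [List.range_succ, List.map_append, List.foldl_append]
            show updk (((List.range n).map πk).foldl updk mk0) (πk n) = _
            rw [ihn.1]
          · rw [List.range_succ, List.map_append, List.foldl_append]
            show upd2 (((List.range n).map π2).foldl upd2 m20) (π2 n) = _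
            rw [ihn.2]
      have hconsk : QAut.GkConsistent sk πk := by
        intro n
        rw [houtk, (hfold n).1]
      have hrunsk : ∀ j, A.RunOn (fun n => (πk n).1) (fun n => (πk n).2.2 j) := by
        intro j
        exact hruns j.castSucc
      obtain ⟨hrunv, hgoodk⟩ := hwk πk hconsk hrunsk
      have hcons2 : QAut.GkConsistent s2 π2 := by
        intro n
        rw [hout2, (hfold n).2]
        exact hcons n
      have hA0 : (fun n : ℕ => (π2 n).2.2 0) = fun n => (πk n).2.1 := by
        funext n
        show (![outk (mem n).1 (π n).1, (π n).2.2 (Fin.last k)]) 0 = _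
        rw [Matrix.cons_val_zero]
      have hA1 : (fun n : ℕ => (π2 n).2.2 1) = fun n => (π n).2.2 (Fin.last k) := by
        funext n
        show (![outk (mem n).1 (π n).1, (π n).2.2 (Fin.last k)]) 1 = _
        rw [Matrix.cons_val_one, Matrix.cons_val_zero]
      have hruns2 : ∀ j, A.RunOn (fun n => (π2 n).1) (fun n => (π2 n).2.2 j) := by
        intro j
        match j with
        | 0 => rw [hA0]; exact hrunv
        | 1 => rw [hA1]; exact hruns (Fin.last k)
      obtain ⟨hrune, hgood2⟩ := hs2 π2 hcons2 hruns2
      refine ⟨hrune, ?_⟩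
      intro j
      have hge0 : Val (fun n => ((πk n).2.1).1) ≤ Val (fun n => ((π n).2.1).1) := by
        have h : Val (fun n => ((π2 n).2.2 0).1) ≤ Val (fun n => ((π2 n).2.1).1) :=
          hgood2 0
        rw [show (fun n => ((π2 n).2.2 0).1) = fun n => ((πk n).2.1).1 from
          funext fun n => congrArg Prod.fst (congrFun hA0 n)] at h
        exact h
      have hge1 : Val (fun n => ((π n).2.2 (Fin.last k)).1) ≤
          Val (fun n => ((π n).2.1).1) := by
        have h : Val (fun n => ((π2 n).2.2 1).1) ≤ Val (fun n => ((π2 n).2.1).1) :=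
          hgood2 1
        rw [show (fun n => ((π2 n).2.2 1).1) = fun n => ((π n).2.2 (Fin.last k)).1 from
          funext fun n => congrArg Prod.fst (congrFun hA1 n)] at h
        exact h
      show Val (fun n => ((π n).2.2 j).1) ≤ Val (fun n => ((π n).2.1).1)
      refine Fin.lastCases ?_ ?_ j
      · exact hge1
      · intro i
        have hki : Val (fun n => ((π n).2.2 i.castSucc).1) ≤
            Val (fun n => ((πk n).2.1).1) := hgoodk i
        exact hki.trans hge0
    · letI := ik
      letI := i2
      refine ⟨Mk × M2, inferInstance, (mk0, m20), upd, fun p a => out2 p.2 a, ?_,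
        fun h a => rfl⟩
      have hc : Fintype.card (Mk × M2) = Fintype.card Mk * Fintype.card M2 :=
        Fintype.card_prod _ _
      rw [hc]
      have h1 : Fintype.card Mk * Fintype.card M2 ≤ (n ^ (k-1) * m ^ k) * m :=
        Nat.mul_le_mul hcardk hcard2
      refine h1.trans ?_
      rw [Nat.add_sub_cancel, mul_assoc, ← pow_succ]
      exact Nat.mul_le_mul_right _ (Nat.pow_le_pow_right hn1 (Nat.sub_le k 1))
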